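/- Let n ≥ 1, s ≥ 1, let H : ℝ^n → ℝ be continuously differentiable, let J ∈ ℝ^{n×n} be skew-symmetric, and let {P_j}_{j=0}^{s−1} be the shifted Legendre polynomials on [0,1]. Let h > 0, let Δ_0, …, Δ_{s−1} ∈ ℝ^n, and let u : [0,h] → ℝ^n be a polynomial of degree at most s satisfying u'(ch) = Σ_{j=0}^{s−1} (γ_j − Δ_j) P_j(c) for all c ∈ [0,1], where γ_j = ∫₀¹ J ∇H(u(τh)) P_j(τ) dτ. Then the Hamiltonian error satisfies the exact identity H(u(h)) − H(u(0)) = −h Σ_{j=0}^{s−1} a_jᵀ Δ_j, where a_j = ∫₀¹ ∇H(u(τh)) P_j(τ) dτ; in particular, the terms a_jᵀ γ_j = a_jᵀ J a_j all vanish. -/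

import Mathlib

set_option maxHeartbeats 1000000

open MeasureTheory intervalIntegral Finset

theorem stmt_6 (n s : ℕ) (hn : 1 ≤ n) (hs : 1 ≤ s)
    (H : (Fin n → ℝ) → ℝ) (hH : ContDiff ℝ 1 H)
    (gradH : (Fin n → ℝ) → Fin n → ℝ)
    (hgrad : ∀ y w, fderiv ℝ H y w = ∑ i, gradH y i * w i)
    (J : Matrix (Fin n) (Fin n) ℝ) (hJ : J.transpose = -J)
    (P : ℕ → Polynomial ℝ)
    (hdeg : ∀ j, (P j).degree = j)
    (horth : ∀ i j, (∫ x in (0:ℝ)..1, (P i).eval x * (P j).eval x)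
      = if i = j then 1 else 0)
    (h : ℝ) (hh : 0 < h)
    (Δ : ℕ → Fin n → ℝ)
    (u : ℝ → Fin n → ℝ)
    (hupoly : ∀ i, ∃ Q : Polynomial ℝ, Q.natDegree ≤ s ∧ ∀ t, u t i = Q.eval t)
    (γ a : ℕ → Fin n → ℝ)
    (hγ : ∀ j, γ j = ∫ τ in (0:ℝ)..1, (P j).eval τ • J.mulVec (gradH (u (τ * h))))
    (ha : ∀ j, a j = ∫ τ in (0:ℝ)..1, (P j).eval τ • gradH (u (τ * h)))
    (hu' : ∀ c ∈ Set.Icc (0:ℝ) 1,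
      HasDerivAt u (∑ j ∈ Finset.range s, (P j).eval c • (γ j - Δ j)) (c * h)) :
    (H (u h) - H (u 0) = -h * ∑ j ∈ Finset.range s, ∑ i, a j i * Δ j i)
    ∧ (∀ j, (∑ i, a j i * γ j i) = ∑ i, a j i * J.mulVec (a j) i)
    ∧ (∀ j, (∑ i, a j i * γ j i) = 0) := by
  -- gradient is continuous
  have hgrad' : ∀ y i, gradH y i = fderiv ℝ H y (Pi.single i 1) := by
    intro y i
    rw [hgrad, Finset.sum_eq_single i]
    · simp
    · intro k _ hk; simp [Pi.single_apply, hk]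
    · simp
  have hgradc : Continuous gradH := by
    apply continuous_pi
    intro i
    have : (fun y => gradH y i) = fun y => fderiv ℝ H y (Pi.single i 1) :=
      funext fun y => hgrad' y i
    rw [this]
    exact (hH.continuous_fderiv one_ne_zero).clm_apply continuous_const
  -- continuity of τ ↦ gradH (u (τ h)) on [0,1]
  have hucont : ∀ τ ∈ Set.Icc (0:ℝ) 1, ContinuousAt (fun τ => u (τ * h)) τ := by
    intro τ hτ
    have : ContinuousAt (u ∘ fun τ : ℝ => τ * h) τ :=
      ContinuousAt.comp (hu' τ hτ).continuousAt ((continuous_mul_right h).continuousAt)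
    exact this
  have hφcont : ContinuousOn (fun τ => gradH (u (τ * h))) (Set.Icc 0 1) :=
    fun τ hτ => (hgradc.continuousAt.comp (hucont τ hτ)).continuousWithinAt
  have huIcc : Set.uIcc (0:ℝ) 1 = Set.Icc 0 1 := Set.uIcc_of_le zero_le_one
  -- basic integrability
  have hint_a : ∀ j, IntervalIntegrable
      (fun τ => (P j).eval τ • gradH (u (τ * h))) volume 0 1 := by
    intro j
    apply ContinuousOn.intervalIntegrable
    rw [huIcc]
    exact ((P j).continuous.continuousOn).smul hφcont
  have hint_γ : ∀ j, IntervalIntegrable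
      (fun τ => (P j).eval τ • J.mulVec (gradH (u (τ * h)))) volume 0 1 := by
    intro j
    apply ContinuousOn.intervalIntegrable
    rw [huIcc]
    refine ((P j).continuous.continuousOn).smul ?_
    exact (J.mulVecLin.continuous_of_finiteDimensional).comp_continuousOn hφcont
  have hint_c : ∀ j i, IntervalIntegrable
      (fun τ => (P j).eval τ * gradH (u (τ * h)) i) volume 0 1 := by
    intro j i
    apply ContinuousOn.intervalIntegrable
    rw [huIcc]
    exact ((P j).continuous.continuousOn).mul
      ((continuous_apply i).comp_continuousOn hφcont)
  -- coordinates of a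
  have haci : ∀ j i, a j i = ∫ τ in (0:ℝ)..1, (P j).eval τ * gradH (u (τ * h)) i := by
    intro j i
    have := (ContinuousLinearMap.proj (R := ℝ) (φ := fun _ : Fin n => ℝ) i).intervalIntegral_comp_comm (hint_a j)
    rw [ha j]
    simp only [ContinuousLinearMap.proj_apply, Pi.smul_apply, smul_eq_mul] at this
    exact this.symm
  -- γ j = J.mulVec (a j)
  have hγJa : ∀ j, γ j = J.mulVec (a j) := by
    intro j
    funext i
    have := (ContinuousLinearMap.proj (R := ℝ) (φ := fun _ : Fin n => ℝ) i).intervalIntegral_comp_comm (hint_γ j)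
    simp only [ContinuousLinearMap.proj_apply, Pi.smul_apply, smul_eq_mul] at this
    rw [hγ j]
    rw [← this]
    have hre : (fun τ => (P j).eval τ * J.mulVec (gradH (u (τ * h))) i)
        = fun τ => ∑ k, J i k * ((P j).eval τ * gradH (u (τ * h)) k) := by
      funext τ
      simp only [Matrix.mulVec, dotProduct, Finset.mul_sum]
      exact Finset.sum_congr rfl fun k _ => by ring
    rw [hre, intervalIntegral.integral_finset_sum]
    · simp only [intervalIntegral.integral_const_mul]
      simp only [Matrix.mulVec, dotProduct]
      exact Finset.sum_congr rfl fun k _ => by rw [haci j k]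
    · intro k _
      exact (hint_c j k).const_mul _
  -- skew symmetry
  have hskew : ∀ v : Fin n → ℝ, ∑ i, v i * J.mulVec v i = 0 := by
    intro v
    have hx : dotProduct v (J.mulVec v) = - dotProduct v (J.mulVec v) := by
      conv_lhs => rw [Matrix.dotProduct_mulVec, ← Matrix.mulVec_transpose, hJ,
        Matrix.neg_mulVec, neg_dotProduct, dotProduct_comm]
    have h1 : ∑ i, v i * J.mulVec v i = dotProduct v (J.mulVec v) := rfl
    rw [h1]; linarith
  -- FTC
  set v : ℝ → Fin n → ℝ := fun τ => ∑ j ∈ Finset.range s, (P j).eval τ • (γ j - Δ j) with hv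
  have hF : ∀ τ ∈ Set.uIcc (0:ℝ) 1, HasDerivAt (fun τ => H (u (τ * h)))
      (h * ∑ i, gradH (u (τ * h)) i * v τ i) τ := by
    intro τ hτ
    rw [huIcc] at hτ
    have h1 : HasDerivAt (fun τ : ℝ => u (τ * h)) (h • v τ) τ := by
      simpa [hv, Function.comp_def] using (hu' τ hτ).scomp τ ((hasDerivAt_id τ).mul_const h)
    have h2 : HasFDerivAt H (fderiv ℝ H (u (τ * h))) (u (τ * h)) :=
      ((hH.differentiable one_ne_zero) (u (τ * h))).hasFDerivAt
    have h3 := h2.comp_hasDerivAt τ h1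
    refine h3.congr_deriv ?_
    rw [hgrad, Finset.mul_sum]
    exact Finset.sum_congr rfl fun i _ => by simp [mul_comm, mul_assoc, mul_left_comm]
  have hDcont : ContinuousOn (fun τ => h * ∑ i, gradH (u (τ * h)) i * v τ i)
      (Set.Icc (0:ℝ) 1) := by
    apply continuousOn_const.mul
    apply continuousOn_finset_sum
    intro i _
    apply ((continuous_apply i).comp_continuousOn hφcont).mul
    simp only [hv, Finset.sum_apply]
    apply continuousOn_finset_sum
    intro j _
    simp only [Pi.smul_apply, smul_eq_mul]
    exact ((P j).continuous.continuousOn).mul continuousOn_const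
  have hDint : IntervalIntegrable (fun τ => h * ∑ i, gradH (u (τ * h)) i * v τ i)
      volume 0 1 := by
    apply ContinuousOn.intervalIntegrable
    rw [huIcc]; exact hDcont
  have key := intervalIntegral.integral_eq_sub_of_hasDerivAt hF hDint
  simp only [one_mul, zero_mul] at key
  -- compute the integral
  have hDeq : (fun τ => h * ∑ i, gradH (u (τ * h)) i * v τ i)
      = fun τ => ∑ j ∈ Finset.range s, ∑ i,
          (h * (γ j - Δ j) i) * ((P j).eval τ * gradH (u (τ * h)) i) := by
    funext τ
    rw [Finset.mul_sum]
    rw [Finset.sum_comm]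
    apply Finset.sum_congr rfl
    intro i _
    simp only [hv, Finset.sum_apply, Pi.smul_apply, smul_eq_mul, Finset.mul_sum]
    apply Finset.sum_congr rfl
    intro j _
    ring
  rw [hDeq] at key
  rw [intervalIntegral.integral_finset_sum] at key
  swap
  · intro j _
    have := IntervalIntegrable.sum (μ := volume) (a := (0:ℝ)) (b := 1) Finset.univ
      (f := fun i τ => (h * (γ j - Δ j) i) * ((P j).eval τ * gradH (u (τ * h)) i))
      (fun i _ => (hint_c j i).const_mul _)
    simpa [Finset.sum_fn] using this
  have key2 : ∀ j ∈ Finset.range s,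
      (∫ τ in (0:ℝ)..1, ∑ i, (h * (γ j - Δ j) i) * ((P j).eval τ * gradH (u (τ * h)) i))
      = ∑ i, h * (γ j - Δ j) i * a j i := by
    intro j _
    rw [intervalIntegral.integral_finset_sum
      (f := fun i τ => (h * (γ j - Δ j) i) * ((P j).eval τ * gradH (u (τ * h)) i))
      (fun i _ => (hint_c j i).const_mul _)]
    exact Finset.sum_congr rfl fun i _ => by
      rw [intervalIntegral.integral_const_mul, ← haci j i]
  rw [Finset.sum_congr rfl key2] at key
  -- rearrange
  have main : H (u h) - H (u 0) = -h * ∑ j ∈ Finset.range s, ∑ i, a j i * Δ j i := by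
    rw [← key]
    rw [neg_mul, Finset.mul_sum, ← Finset.sum_neg_distrib]
    apply Finset.sum_congr rfl
    intro j _
    have hzero : ∑ i, a j i * γ j i = 0 := by
      rw [hγJa j]; exact hskew (a j)
    have : ∑ i, h * (γ j - Δ j) i * a j i
        = h * ((∑ i, a j i * γ j i) - ∑ i, a j i * Δ j i) := by
      rw [← Finset.sum_sub_distrib, Finset.mul_sum]
      apply Finset.sum_congr rfl
      intro i _
      simp only [Pi.sub_apply]
      ring
    rw [this, hzero]
    ring
  refine ⟨main, fun j => ?_, fun j => ?_⟩
  · rw [hγJa j]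
  · rw [hγJa j]; exact hskew (a j)
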